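/- Take G = 5 and p₀ = 3, so the dictionary D₃ ⊆ ℝ⁵ consists of e₁,…,e₅, the normalized width-2 pulses (e_i+e_{i+1})/√2 for i = 1,…,4, and the normalized width-3 pulses (e_i+e_{i+1}+e_{i+2})/√3 for i = 1,2,3. Then the sparse-representation cost of γ₃ = (1,1,1,1,0)ᵀ over D₃ equals 1+√3 (attained by γ₃ = √3·(e₁+e₂+e₃)/√3 + 1·e₄), while the sparse-representation cost of γ₄ = (1,1,0,1,1)ᵀ over D₃ equals 2√2. Since 1+√3 < 2√2, the dictionary D₃ favors γ₃, which has better group-sparsity than γ₄. -/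

import Mathlib

open Finset

/-- `1/√2`, the height of a normalized width-2 discrete rectangular pulse. -/
noncomputable def s2 : ℝ := (Real.sqrt 2)⁻¹

/-- `1/√3`, the height of a normalized width-3 discrete rectangular pulse. -/
noncomputable def s3 : ℝ := (Real.sqrt 3)⁻¹

/-- The dictionary matrix `D` for `G = 5`, `p₀ = 3`: its twelve columns are
`e₁, …, e₅`, the normalized width-2 pulses `(eᵢ+e_{i+1})/√2` for `i = 1,…,4`, and the
normalized width-3 pulses `(eᵢ+e_{i+1}+e_{i+2})/√3` for `i = 1,2,3`. -/
noncomputable def D53 : Matrix (Fin 5) (Fin 12) ℝ :=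
  Matrix.of fun i j =>
    (![![1,0,0,0,0], ![0,1,0,0,0], ![0,0,1,0,0], ![0,0,0,1,0], ![0,0,0,0,1],
       ![s2,s2,0,0,0], ![0,s2,s2,0,0], ![0,0,s2,s2,0], ![0,0,0,s2,s2],
       ![s3,s3,s3,0,0], ![0,s3,s3,s3,0], ![0,0,s3,s3,s3]]
      : Fin 12 → Fin 5 → ℝ) j i

private lemma sum12 (α : Fin 12 → ℝ) :
    (∑ j, α j) = α 0 + (α 1 + (α 2 + (α 3 + (α 4 + (α 5 + (α 6 +
      (α 7 + (α 8 + (α 9 + (α 10 + α 11)))))))))) := by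
  simp [Fin.sum_univ_succ]

set_option maxHeartbeats 1600000 in
/-- Over the dictionary `D₃` (for `G = 5`, `p₀ = 3`), the sparse-representation cost of
`γ₃ = (1,1,1,1,0)ᵀ` equals `1 + √3` (attained by `√3·(e₁+e₂+e₃)/√3 + 1·e₄`), while the
cost of `γ₄ = (1,1,0,1,1)ᵀ` equals `2√2`; since `1 + √3 < 2√2`, the dictionary `D₃`
favors `γ₃`, which has better group-sparsity. -/
theorem stmt_13 :
    IsLeast {r : ℝ | ∃ α : Fin 12 → ℝ, (∀ j, 0 ≤ α j)
        ∧ D53.mulVec α = ![1, 1, 1, 1, 0] ∧ r = ∑ j, α j} (1 + Real.sqrt 3)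
    ∧ IsLeast {r : ℝ | ∃ α : Fin 12 → ℝ, (∀ j, 0 ≤ α j)
        ∧ D53.mulVec α = ![1, 1, 0, 1, 1] ∧ r = ∑ j, α j} (2 * Real.sqrt 2)
    ∧ 1 + Real.sqrt 3 < 2 * Real.sqrt 2 := by
  have hr2 : Real.sqrt 2 ^ 2 = 2 := Real.sq_sqrt (by norm_num)
  have hr3 : Real.sqrt 3 ^ 2 = 3 := Real.sq_sqrt (by norm_num)
  have hr2p : (0:ℝ) < Real.sqrt 2 := Real.sqrt_pos.mpr (by norm_num)
  have hr3p : (0:ℝ) < Real.sqrt 3 := Real.sqrt_pos.mpr (by norm_num)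
  have hr2u : Real.sqrt 2 < 142/100 := by nlinarith
  have hr3u : Real.sqrt 3 < 174/100 := by nlinarith
  have hr2l : 141/100 < Real.sqrt 2 := by nlinarith
  have hr3l : 1 < Real.sqrt 3 := by nlinarith
  have hr23 : Real.sqrt 2 * Real.sqrt 3 < 5/2 := by
    nlinarith [mul_pos hr2p hr3p]
  have hlt : 1 + Real.sqrt 3 < 2 * Real.sqrt 2 := by nlinarith
  have hm2 : Real.sqrt 2 * Real.sqrt 2 = 2 := Real.mul_self_sqrt (by norm_num)
  have hm3 : Real.sqrt 3 * Real.sqrt 3 = 3 := Real.mul_self_sqrt (by norm_num)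
  have hs2 : s2 = Real.sqrt 2 / 2 := by
    rw [s2, eq_div_iff (by norm_num : (2:ℝ) ≠ 0),
      inv_mul_eq_iff_eq_mul₀ (ne_of_gt hr2p)]
    linarith [hm2]
  have hs3 : s3 = Real.sqrt 3 / 3 := by
    rw [s3, eq_div_iff (by norm_num : (3:ℝ) ≠ 0),
      inv_mul_eq_iff_eq_mul₀ (ne_of_gt hr3p)]
    linarith [hm3]
  refine ⟨⟨⟨![0,0,0,1,0,0,0,0,0,Real.sqrt 3,0,0], ?_, ?_, ?_⟩, ?_⟩,
    ⟨⟨![0,0,0,0,0,Real.sqrt 2,0,0,Real.sqrt 2,0,0,0], ?_, ?_, ?_⟩, ?_⟩, hlt⟩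
  · intro j; fin_cases j <;> first | exact le_rfl | exact zero_le_one | exact Real.sqrt_nonneg _
  · funext i
    fin_cases i <;>
      simp [D53, Matrix.mulVec, dotProduct, Fin.sum_univ_succ, hs2, hs3] <;>
      (try field_simp) <;> (try nlinarith [hm2, hm3])
  · simp [Fin.sum_univ_succ]
    try ring
  · rintro r ⟨α, hpos, heq, rfl⟩
    have h0 : α 0 + (s2 * α 5 + s3 * α 9) = 1 := by
      have := congrFun heq 0
      simp [D53, Matrix.mulVec, dotProduct, Fin.sum_univ_succ] at this
      exact this
    have h1 : α 1 + (s2 * α 5 + (s2 * α 6 + (s3 * α 9 + s3 * α 10))) = 1 := by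
      have := congrFun heq 1
      simp [D53, Matrix.mulVec, dotProduct, Fin.sum_univ_succ] at this
      exact this
    have h2 : α 2 + (s2 * α 6 + (s2 * α 7 + (s3 * α 9 + (s3 * α 10 + s3 * α 11)))) = 1 := by
      have := congrFun heq 2
      simp [D53, Matrix.mulVec, dotProduct, Fin.sum_univ_succ] at this
      exact this
    have h3 : α 3 + (s2 * α 7 + (s2 * α 8 + (s3 * α 10 + s3 * α 11))) = 1 := by
      have := congrFun heq 3
      simp [D53, Matrix.mulVec, dotProduct, Fin.sum_univ_succ] at this
      exact this
    have h4 : α 4 + (s2 * α 8 + s3 * α 11) = 0 := by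
      have := congrFun heq 4
      simp [D53, Matrix.mulVec, dotProduct, Fin.sum_univ_succ] at this
      exact this
    rw [hs2, hs3] at h0 h1 h2 h3 h4
    rw [sum12]
    have h1m := congrArg (fun x => (Real.sqrt 3 - 1) * x) h1
    have h2m := congrArg (fun x => (Real.sqrt 3 - 1) * x) h2
    have hq9 : Real.sqrt 3 * Real.sqrt 3 * α 9 = 3 * α 9 := by rw [hm3]
    have hq10 : Real.sqrt 3 * Real.sqrt 3 * α 10 = 3 * α 10 := by rw [hm3]
    have hq11 : Real.sqrt 3 * Real.sqrt 3 * α 11 = 3 * α 11 := by rw [hm3]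
    have n1 : 0 ≤ (3 - Real.sqrt 3) * α 1 := mul_nonneg (by linarith) (hpos 1)
    have n2 : 0 ≤ (3 - Real.sqrt 3) * α 2 := mul_nonneg (by linarith) (hpos 2)
    have n4 : 0 ≤ α 4 := hpos 4
    have n5 : 0 ≤ (4 - Real.sqrt 2 - Real.sqrt 2 * Real.sqrt 3) * α 5 :=
      mul_nonneg (by linarith) (hpos 5)
    have n6 : 0 ≤ (2 + Real.sqrt 2 - Real.sqrt 2 * Real.sqrt 3) * α 6 :=
      mul_nonneg (by linarith) (hpos 6)
    have n7 : 0 ≤ (4 - Real.sqrt 2 - Real.sqrt 2 * Real.sqrt 3) * α 7 :=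
      mul_nonneg (by linarith) (hpos 7)
    have n8 : 0 ≤ (2 - Real.sqrt 2) * α 8 := mul_nonneg (by linarith) (hpos 8)
    have n11 : 0 ≤ (3 - Real.sqrt 3) * α 11 := mul_nonneg (by linarith) (hpos 11)
    ring_nf at h0 h1m h2m h3 h4 hq9 hq10 hq11 n1 n2 n5 n6 n7 n8 n11 ⊢
    linarith [h0, h1m, h2m, h3, h4, hq9, hq10, hq11, n1, n2, n4, n5, n6, n7, n8, n11]
  · intro j; fin_cases j <;> first | exact le_rfl | exact zero_le_one | exact Real.sqrt_nonneg _
  · funext i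
    fin_cases i <;>
      simp [D53, Matrix.mulVec, dotProduct, Fin.sum_univ_succ, hs2, hs3] <;>
      (try field_simp) <;> (try nlinarith [hm2, hm3])
  · simp [Fin.sum_univ_succ]
    try ring
  · rintro r ⟨α, hpos, heq, rfl⟩
    have h0 : α 0 + (s2 * α 5 + s3 * α 9) = 1 := by
      have := congrFun heq 0
      simp [D53, Matrix.mulVec, dotProduct, Fin.sum_univ_succ] at this
      exact this
    have h1 : α 1 + (s2 * α 5 + (s2 * α 6 + (s3 * α 9 + s3 * α 10))) = 1 := by
      have := congrFun heq 1
      simp [D53, Matrix.mulVec, dotProduct, Fin.sum_univ_succ] at this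
      exact this
    have h3 : α 3 + (s2 * α 7 + (s2 * α 8 + (s3 * α 10 + s3 * α 11))) = 1 := by
      have := congrFun heq 3
      simp [D53, Matrix.mulVec, dotProduct, Fin.sum_univ_succ] at this
      exact this
    have h4 : α 4 + (s2 * α 8 + s3 * α 11) = 1 := by
      have := congrFun heq 4
      simp [D53, Matrix.mulVec, dotProduct, Fin.sum_univ_succ] at this
      exact this
    rw [hs2, hs3] at h0 h1 h3 h4
    rw [sum12]
    have h0m := congrArg (fun x => Real.sqrt 2 * x) h0
    have h1m := congrArg (fun x => Real.sqrt 2 * x) h1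
    have h3m := congrArg (fun x => Real.sqrt 2 * x) h3
    have h4m := congrArg (fun x => Real.sqrt 2 * x) h4
    have hq5 : Real.sqrt 2 * Real.sqrt 2 * α 5 = 2 * α 5 := by rw [hm2]
    have hq6 : Real.sqrt 2 * Real.sqrt 2 * α 6 = 2 * α 6 := by rw [hm2]
    have hq7 : Real.sqrt 2 * Real.sqrt 2 * α 7 = 2 * α 7 := by rw [hm2]
    have hq8 : Real.sqrt 2 * Real.sqrt 2 * α 8 = 2 * α 8 := by rw [hm2]
    have n0 : 0 ≤ (2 - Real.sqrt 2) * α 0 := mul_nonneg (by linarith) (hpos 0)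
    have n1 : 0 ≤ (2 - Real.sqrt 2) * α 1 := mul_nonneg (by linarith) (hpos 1)
    have n2 : 0 ≤ α 2 := hpos 2
    have n3 : 0 ≤ (2 - Real.sqrt 2) * α 3 := mul_nonneg (by linarith) (hpos 3)
    have n4 : 0 ≤ (2 - Real.sqrt 2) * α 4 := mul_nonneg (by linarith) (hpos 4)
    have n6 : 0 ≤ α 6 := hpos 6
    have n7 : 0 ≤ α 7 := hpos 7
    have n9 : 0 ≤ (6 - 2 * (Real.sqrt 2 * Real.sqrt 3)) * α 9 :=
      mul_nonneg (by linarith) (hpos 9)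
    have n10 : 0 ≤ (6 - 2 * (Real.sqrt 2 * Real.sqrt 3)) * α 10 :=
      mul_nonneg (by linarith) (hpos 10)
    have n11 : 0 ≤ (6 - 2 * (Real.sqrt 2 * Real.sqrt 3)) * α 11 :=
      mul_nonneg (by linarith) (hpos 11)
    ring_nf at h0m h1m h3m h4m hq5 hq6 hq7 hq8 n0 n1 n3 n4 n9 n10 n11 ⊢
    linarith [h0m, h1m, h3m, h4m, hq5, hq6, hq7, hq8, n0, n1, n2, n3, n4, n6, n7, n9, n10, n11]
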